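/- Let α > 0 and define U(x,t) = 2 arctan(e^{(x−t)/α}). Then U satisfies U_xx − U_tt − α U_t = sin U on ℝ², and moreover U_xxt(x,t) = −(2/α³)·(e^{2ξ} − 6 + e^{−2ξ})/(e^{ξ} + e^{−ξ})³ with ξ = (x−t)/α, which is a bounded function of (x,t). -/

import Mathlib

lemma hasDerivAt_F (ξ : ℝ) :
    HasDerivAt (fun s => 2 * Real.arctan (Real.exp s)) (1 / Real.cosh ξ) ξ := by
  have h := ((Real.hasDerivAt_arctan (Real.exp ξ)).comp ξ (Real.hasDerivAt_exp ξ)).const_mul 2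
  refine h.congr_deriv ?_
  rw [Real.cosh_eq, Real.exp_neg]
  have h1 : (0:ℝ) < 1 + Real.exp ξ ^ 2 := by positivity
  field_simp
  ring

lemma hasDerivAt_F1 (ξ : ℝ) :
    HasDerivAt (fun s => 1 / Real.cosh s) (-Real.sinh ξ / Real.cosh ξ ^ 2) ξ := by
  have h := (Real.hasDerivAt_cosh ξ).inv (Real.cosh_pos ξ).ne'
  simp only [one_div]
  exact h

lemma hasDerivAt_F2 (ξ : ℝ) :
    HasDerivAt (fun s => -Real.sinh s / Real.cosh s ^ 2)
      ((Real.cosh ξ ^ 2 - 2) / Real.cosh ξ ^ 3) ξ := by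
  have hnum : HasDerivAt (fun s => -Real.sinh s) (-Real.cosh ξ) ξ := (Real.hasDerivAt_sinh ξ).neg
  have hden : HasDerivAt (fun s => Real.cosh s ^ 2) (2 * Real.cosh ξ * Real.sinh ξ) ξ := by
    have := (Real.hasDerivAt_cosh ξ).pow 2
    refine this.congr_deriv ?_; norm_num
  have hc : Real.cosh ξ ^ 2 ≠ 0 := by positivity
  have h := hnum.div hden hc
  refine h.congr_deriv ?_
  have hs : Real.sinh ξ ^ 2 = Real.cosh ξ ^ 2 - 1 := by
    have := Real.cosh_sq ξ; linarith
  have hc0 : Real.cosh ξ ≠ 0 := (Real.cosh_pos ξ).ne'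
  field_simp
  nlinarith [hs]

lemma sin_F (ξ : ℝ) : Real.sin (2 * Real.arctan (Real.exp ξ)) = 1 / Real.cosh ξ := by
  have hy : (0:ℝ) ≤ 1 + Real.exp ξ ^ 2 := by positivity
  have hs : Real.sqrt (1 + Real.exp ξ ^ 2) * Real.sqrt (1 + Real.exp ξ ^ 2)
      = 1 + Real.exp ξ ^ 2 := Real.mul_self_sqrt hy
  have hsq : Real.sqrt (1 + Real.exp ξ ^ 2) ≠ 0 := by positivity
  rw [Real.sin_two_mul, Real.sin_arctan, Real.cos_arctan, Real.cosh_eq, Real.exp_neg]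
  have he : Real.exp ξ ≠ 0 := Real.exp_ne_zero ξ
  field_simp
  nlinarith [hs]

lemma F3_eq (α ξ : ℝ) (hα : α ≠ 0) :
    (Real.cosh ξ ^ 2 - 2) / Real.cosh ξ ^ 3 * (-1/α) * (1/α) * (1/α) =
      -(2 / α ^ 3) * (Real.exp (2*ξ) - 6 + Real.exp (-(2*ξ))) /
        (Real.exp ξ + Real.exp (-ξ)) ^ 3 := by
  have h2 : Real.exp (2*ξ) = Real.exp ξ ^ 2 := by rw [two_mul, Real.exp_add]; ring
  have he : Real.exp ξ ≠ 0 := Real.exp_ne_zero ξ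
  have hden : Real.exp ξ + (Real.exp ξ)⁻¹ ≠ 0 := by positivity
  rw [Real.exp_neg (2*ξ), Real.exp_neg ξ, h2, Real.cosh_eq, Real.exp_neg ξ]
  field_simp
  ring

/-- The kink `U(x,t) = 2 arctan e^{(x-t)/α}` solves `U_xx - U_tt - α U_t = sin U`;
its mixed derivative `U_xxt` has the stated explicit form and is bounded on `ℝ²`. -/
theorem kink_solution_and_bounded_Uxxt (α : ℝ) (hα : 0 < α)
    (U : ℝ → ℝ → ℝ) (hU : ∀ x t, U x t = 2 * Real.arctan (Real.exp ((x - t) / α))) :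
    (∀ x t : ℝ,
        deriv (fun x' => deriv (fun x'' => U x'' t) x') x -
          deriv (fun t' => deriv (fun t'' => U x t'') t') t -
          α * deriv (fun t' => U x t') t = Real.sin (U x t)) ∧
      (∀ x t : ℝ,
        deriv (fun t' => deriv (fun x' => deriv (fun x'' => U x'' t') x') x) t =
          -(2 / α ^ 3) *
            (Real.exp (2 * ((x - t) / α)) - 6 + Real.exp (-(2 * ((x - t) / α)))) /
              (Real.exp ((x - t) / α) + Real.exp (-((x - t) / α))) ^ 3) ∧
      ∃ M : ℝ, ∀ x t : ℝ,
        |deriv (fun t' => deriv (fun x' => deriv (fun x'' => U x'' t') x') x) t| ≤ M := by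
  have hα0 : α ≠ 0 := hα.ne'
  have hξx : ∀ (x t : ℝ), HasDerivAt (fun x' : ℝ => (x' - t) / α) (1/α) x := by
    intro x t
    simpa using ((hasDerivAt_id x).sub_const t).div_const α
  have hξt : ∀ (x t : ℝ), HasDerivAt (fun t' : ℝ => (x - t') / α) (-1/α) t := by
    intro x t
    simpa using ((hasDerivAt_id t).const_sub x).div_const α
  have h1 : ∀ (x t : ℝ), HasDerivAt (fun x'' => U x'' t)
      (1 / Real.cosh ((x - t)/α) * (1/α)) x := by
    intro x t
    have e : (fun x'' => U x'' t) = fun x'' => 2 * Real.arctan (Real.exp ((x'' - t)/α)) :=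
      funext fun x'' => hU x'' t
    rw [e]
    exact (hasDerivAt_F _).comp x (hξx x t)
  have h1t : ∀ (x t : ℝ), HasDerivAt (fun t'' => U x t'')
      (1 / Real.cosh ((x - t)/α) * (-1/α)) t := by
    intro x t
    have e : (fun t'' => U x t'') = fun t'' => 2 * Real.arctan (Real.exp ((x - t'')/α)) :=
      funext fun t'' => hU x t''
    rw [e]
    exact (hasDerivAt_F _).comp t (hξt x t)
  have h2 : ∀ (x t : ℝ), HasDerivAt (fun x' => deriv (fun x'' => U x'' t) x')
      (-Real.sinh ((x - t)/α) / Real.cosh ((x - t)/α) ^ 2 * (1/α) * (1/α)) x := by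
    intro x t
    have e : (fun x' => deriv (fun x'' => U x'' t) x')
        = fun x' => 1 / Real.cosh ((x' - t)/α) * (1/α) :=
      funext fun x' => (h1 x' t).deriv
    rw [e]
    exact ((hasDerivAt_F1 _).comp x (hξx x t)).mul_const (1/α)
  have h2t : ∀ (x t : ℝ), HasDerivAt (fun t' => deriv (fun t'' => U x t'') t')
      (-Real.sinh ((x - t)/α) / Real.cosh ((x - t)/α) ^ 2 * (-1/α) * (-1/α)) t := by
    intro x t
    have e : (fun t' => deriv (fun t'' => U x t'') t')
        = fun t' => 1 / Real.cosh ((x - t')/α) * (-1/α) :=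
      funext fun t' => (h1t x t').deriv
    rw [e]
    exact ((hasDerivAt_F1 _).comp t (hξt x t)).mul_const (-1/α)
  have h3 : ∀ (x t : ℝ), HasDerivAt
      (fun t' => deriv (fun x' => deriv (fun x'' => U x'' t') x') x)
      ((Real.cosh ((x - t)/α) ^ 2 - 2) / Real.cosh ((x - t)/α) ^ 3
        * (-1/α) * (1/α) * (1/α)) t := by
    intro x t
    have e : (fun t' => deriv (fun x' => deriv (fun x'' => U x'' t') x') x)
        = fun t' => -Real.sinh ((x - t')/α) / Real.cosh ((x - t')/α) ^ 2 * (1/α) * (1/α) :=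
      funext fun t' => (h2 x t').deriv
    rw [e]
    exact ((((hasDerivAt_F2 _).comp t (hξt x t)).mul_const (1/α)).mul_const (1/α))
  refine ⟨?_, ?_, ?_⟩
  · intro x t
    rw [(h2 x t).deriv, (h2t x t).deriv, (h1t x t).deriv, hU x t, sin_F]
    have hc : Real.cosh ((x - t)/α) ≠ 0 := (Real.cosh_pos _).ne'
    field_simp
    ring
  · intro x t
    rw [(h3 x t).deriv]
    exact F3_eq α ((x - t)/α) hα0
  · refine ⟨3 / α ^ 3, fun x t => ?_⟩
    rw [(h3 x t).deriv]
    set c := Real.cosh ((x - t)/α) with hcdef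
    have hc1 : (1:ℝ) ≤ c := Real.one_le_cosh _
    have hc0 : (0:ℝ) < c := by linarith
    have habs : |(c ^ 2 - 2) / c ^ 3| ≤ 3 := by
      rw [abs_div, abs_of_pos (by positivity : (0:ℝ) < c ^ 3), div_le_iff₀ (by positivity)]
      have : |c ^ 2 - 2| ≤ 3 * c ^ 3 := abs_le.mpr ⟨by nlinarith, by nlinarith⟩
      linarith
    have hinv : |(-1 : ℝ)/α| = 1/α := by
      rw [abs_div]; simp [abs_of_pos hα]
    have hinv2 : |(1 : ℝ)/α| = 1/α := by
      rw [abs_div]; simp [abs_of_pos hα]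
    rw [abs_mul, abs_mul, abs_mul, hinv, hinv2]
    have h1α : (0:ℝ) < 1/α := by positivity
    calc |(c ^ 2 - 2) / c ^ 3| * (1/α) * (1/α) * (1/α)
        ≤ 3 * (1/α) * (1/α) * (1/α) := by gcongr
      _ = 3 / α ^ 3 := by field_simp
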